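/- Let γ₁ < γ₂ be the roots of γ(γ−θ) = 1/(Nρ) with Nρ(1+θ) < 1, ρ > 0, and let a* = (ln(1+1/γ₂) − ln(1+1/γ₁))/(γ₂−γ₁). Define U*(a) = (γ₂ e^{−γ₁(a*−a)} − γ₁ e^{−γ₂(a*−a)})/(γ₂−γ₁) for a ∈ [0, a*]. Then U* satisfies the ODE ρ(U*'' − θU*') = U*/N on (0, a*), together with the boundary conditions U*(a*) = 1, U*'(a*) = 0 (smooth pasting), and U*(0) + U*'(0) = 0 (normal reflection). -/

import Mathlib

open Real

/-- The cooperative stopping cutoff `a*`. -/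
noncomputable def astarDef (γ₁ γ₂ : ℝ) : ℝ :=
  (Real.log (1 + 1 / γ₂) - Real.log (1 + 1 / γ₁)) / (γ₂ - γ₁)

/-- The cooperative normalized value on the exploration region. -/
noncomputable def UstarDef (γ₁ γ₂ astar : ℝ) (a : ℝ) : ℝ :=
  (γ₂ * Real.exp (-γ₁ * (astar - a)) - γ₁ * Real.exp (-γ₂ * (astar - a))) / (γ₂ - γ₁)

lemma hasDerivAt_E (γ s a : ℝ) :
    HasDerivAt (fun x => Real.exp (-γ * (s - x))) (γ * Real.exp (-γ * (s - a))) a := by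
  have h : HasDerivAt (fun x : ℝ => -γ * (s - x)) γ a := by
    have := ((hasDerivAt_id a).const_sub s).const_mul (-γ)
    simpa using this
  simpa [mul_comm] using h.exp

lemma hasDerivAt_U (γ₁ γ₂ s a : ℝ) :
    HasDerivAt (UstarDef γ₁ γ₂ s)
      ((γ₂ * (γ₁ * Real.exp (-γ₁ * (s - a))) - γ₁ * (γ₂ * Real.exp (-γ₂ * (s - a)))) / (γ₂ - γ₁))
      a := by
  exact (((hasDerivAt_E γ₁ s a).const_mul γ₂).sub
    ((hasDerivAt_E γ₂ s a).const_mul γ₁)).div_const _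

lemma deriv_U (γ₁ γ₂ s : ℝ) :
    deriv (UstarDef γ₁ γ₂ s) = fun a =>
      (γ₂ * (γ₁ * Real.exp (-γ₁ * (s - a))) - γ₁ * (γ₂ * Real.exp (-γ₂ * (s - a)))) / (γ₂ - γ₁) := by
  funext a
  exact (hasDerivAt_U γ₁ γ₂ s a).deriv

lemma deriv2_U (γ₁ γ₂ s : ℝ) :
    deriv (deriv (UstarDef γ₁ γ₂ s)) = fun a =>
      (γ₂ * (γ₁ * (γ₁ * Real.exp (-γ₁ * (s - a)))) -
        γ₁ * (γ₂ * (γ₂ * Real.exp (-γ₂ * (s - a))))) / (γ₂ - γ₁) := by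
  funext a
  rw [deriv_U]
  have h : HasDerivAt (fun a =>
      (γ₂ * (γ₁ * Real.exp (-γ₁ * (s - a))) - γ₁ * (γ₂ * Real.exp (-γ₂ * (s - a)))) / (γ₂ - γ₁))
      ((γ₂ * (γ₁ * (γ₁ * Real.exp (-γ₁ * (s - a)))) -
        γ₁ * (γ₂ * (γ₂ * Real.exp (-γ₂ * (s - a))))) / (γ₂ - γ₁)) a := by
    have h1 := ((hasDerivAt_E γ₁ s a).const_mul γ₁).const_mul γ₂
    have h2 := ((hasDerivAt_E γ₂ s a).const_mul γ₂).const_mul γ₁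
    have := (h1.sub h2).div_const (γ₂ - γ₁)
    exact this
  exact h.deriv

/-- `U*` satisfies the ODE `ρ(U*'' − θU*') = U*/N` on `(0, a*)`, with
value matching `U*(a*) = 1`, smooth pasting `U*'(a*) = 0`, and the normal
reflection condition `U*(0) + U*'(0) = 0`. -/
theorem cooperative_value_solves_ode (N ρ θ γ₁ γ₂ : ℝ) (hN : 1 ≤ N) (hρ : 0 < ρ)
    (hmain : N * ρ * (1 + θ) < 1)
    (hlt : γ₁ < γ₂)
    (hroot1 : γ₁ * (γ₁ - θ) = 1 / (N * ρ))
    (hroot2 : γ₂ * (γ₂ - θ) = 1 / (N * ρ)) :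
    (∀ a ∈ Set.Ioo 0 (astarDef γ₁ γ₂),
      ρ * (deriv (deriv (UstarDef γ₁ γ₂ (astarDef γ₁ γ₂))) a
            - θ * deriv (UstarDef γ₁ γ₂ (astarDef γ₁ γ₂)) a)
        = UstarDef γ₁ γ₂ (astarDef γ₁ γ₂) a / N) ∧
    UstarDef γ₁ γ₂ (astarDef γ₁ γ₂) (astarDef γ₁ γ₂) = 1 ∧
    deriv (UstarDef γ₁ γ₂ (astarDef γ₁ γ₂)) (astarDef γ₁ γ₂) = 0 ∧
    UstarDef γ₁ γ₂ (astarDef γ₁ γ₂) 0 + deriv (UstarDef γ₁ γ₂ (astarDef γ₁ γ₂)) 0 = 0 := by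
  set s := astarDef γ₁ γ₂ with hs
  have hN0 : (0:ℝ) < N := lt_of_lt_of_le one_pos hN
  have hP : (0:ℝ) < N * ρ := mul_pos hN0 hρ
  have hd : γ₂ - γ₁ ≠ 0 := sub_ne_zero.2 (ne_of_gt hlt)
  have hsum : γ₁ + γ₂ = θ := by
    have h := hroot1.trans hroot2.symm
    have : (γ₁ - γ₂) * (γ₁ + γ₂ - θ) = 0 := by ring_nf; nlinarith [h]
    rcases mul_eq_zero.1 this with h' | h'
    · exact absurd h' (sub_ne_zero.2 (ne_of_lt hlt))
    · linarith
  have hprod : γ₁ * γ₂ = -(1 / (N * ρ)) := by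
    have : γ₂ = θ - γ₁ := by linarith
    rw [this]; nlinarith [hroot1]
  have hinv : 1 + θ < 1 / (N * ρ) := by
    rw [lt_div_iff₀ hP]; nlinarith
  have hkey : (1 + γ₁) * (1 + γ₂) < 0 := by nlinarith
  have h1neg : 1 + γ₁ < 0 := by nlinarith
  have h2pos : 0 < 1 + γ₂ := by nlinarith
  have hγ1neg : γ₁ < 0 := by linarith
  have hPinv : 0 < 1 / (N * ρ) := by positivity
  have hγ2pos : 0 < γ₂ := by
    by_contra h
    push_neg at h
    nlinarith [hprod, hPinv]
  have hγ1ne : γ₁ ≠ 0 := ne_of_lt hγ1neg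
  have hγ2ne : γ₂ ≠ 0 := ne_of_gt hγ2pos
  refine ⟨?_, ?_, ?_, ?_⟩
  · intro a _
    rw [deriv2_U, deriv_U]
    simp only [UstarDef]
    have hr1 : γ₁ * (γ₁ - θ) * (N * ρ) = 1 := by
      field_simp at hroot1; linarith [hroot1]
    have hr2 : γ₂ * (γ₂ - θ) * (N * ρ) = 1 := by
      field_simp at hroot2; linarith [hroot2]
    simp only [neg_mul]
    field_simp
    linear_combination (γ₂ * Real.exp (-(γ₁ * (s - a)))) * hr1 -
      (γ₁ * Real.exp (-(γ₂ * (s - a)))) * hr2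
  · simp [UstarDef, div_self hd]
  · rw [deriv_U]
    simp only [sub_self, mul_zero, Real.exp_zero, mul_one]
    rw [mul_comm γ₂ γ₁, sub_self, zero_div]
  · rw [deriv_U]
    simp only [UstarDef, sub_zero]
    rw [← add_div, div_eq_zero_iff]
    left
    have h1' : 0 < 1 + 1 / γ₁ := by
      have : 1 + 1 / γ₁ = (1 + γ₁) / γ₁ := by field_simp; ring
      rw [this]
      exact div_pos_of_neg_of_neg h1neg hγ1neg
    have h2' : 0 < 1 + 1 / γ₂ := by positivity
    have hexp : Real.exp ((γ₂ - γ₁) * s) = (1 + 1 / γ₂) / (1 + 1 / γ₁) := by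
      have : (γ₂ - γ₁) * s = Real.log (1 + 1 / γ₂) - Real.log (1 + 1 / γ₁) := by
        rw [hs, astarDef]; field_simp
      rw [this, Real.exp_sub, Real.exp_log h2', Real.exp_log h1']
    -- goal: γ₂*e1 - γ₁*e2 + (γ₂*(γ₁*e1) - γ₁*(γ₂*e2)) = 0
    have he : Real.exp (-γ₁ * s) = Real.exp (-γ₂ * s) * ((1 + 1/γ₂)/(1 + 1/γ₁)) := by
      rw [← hexp, ← Real.exp_add]; ring_nf
    have e1 : (1:ℝ) + 1/γ₁ = (γ₁+1)/γ₁ := by field_simp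
    have e2 : (1:ℝ) + 1/γ₂ = (γ₂+1)/γ₂ := by field_simp
    rw [he, e1, e2]
    have hne1 : γ₁ + 1 ≠ 0 := by linarith
    field_simp
    ring
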